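/- Let α₀ be the unique positive solution of √(1+4α²) + log(2α/(1+√(1+4α²))) = 0. If 0 < α < α₀, then Re χ_α(0) < 0 and there exists a unique ξ ∈ (0,1) such that χ_α(−ξ) = 0; if α = α₀, then χ_α(0) = 0; and if α > α₀, then Re χ_α(0) > 0. -/

import Mathlib

open Complex

/-- The principal branch of the complex square root. -/
noncomputable def csqrt (z : ℂ) : ℂ := z ^ (1 / 2 : ℂ)

/-- `χ_α(z) := (1/2)·√(4α²+(1+z)²) + ((1+z)/2)·log(2α/(1+z+√(4α²+(1+z)²)))`,
with principal branches of square root and logarithm. -/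
noncomputable def chi (α : ℝ) (z : ℂ) : ℂ :=
  (1 / 2 : ℂ) * csqrt (4 * (α : ℂ) ^ 2 + (1 + z) ^ 2) +
    (1 + z) / 2 * Complex.log (2 * (α : ℂ) / (1 + z + csqrt (4 * (α : ℂ) ^ 2 + (1 + z) ^ 2)))

/-- The real-valued version of `2·χ_α(s-1)` for `s > 0`. -/
noncomputable def Hfun (α s : ℝ) : ℝ :=
  Real.sqrt (4 * α ^ 2 + s ^ 2) +
    s * Real.log (2 * α / (s + Real.sqrt (4 * α ^ 2 + s ^ 2)))

lemma sqrtA_pos {α : ℝ} (hα : 0 < α) (s : ℝ) : 0 < Real.sqrt (4 * α ^ 2 + s ^ 2) :=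
  Real.sqrt_pos.2 (by positivity)

lemma sqrtA_ge {α : ℝ} (hα : 0 < α) (s : ℝ) : 2 * α ≤ Real.sqrt (4 * α ^ 2 + s ^ 2) := by
  have h : (2 * α) = Real.sqrt ((2 * α) ^ 2) := (Real.sqrt_sq (by positivity)).symm
  rw [h]
  exact Real.sqrt_le_sqrt (by nlinarith [sq_nonneg s])

lemma csqrt_ofReal {x : ℝ} (hx : 0 ≤ x) : csqrt (x : ℂ) = (Real.sqrt x : ℂ) := by
  unfold csqrt
  rw [show (1 / 2 : ℂ) = ((1 / 2 : ℝ) : ℂ) by norm_num, ← Complex.ofReal_cpow hx,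
    ← Real.sqrt_eq_rpow]

/-- For real `s > 0`, `chi α (s - 1)` is the real number `Hfun α s / 2`. -/
lemma chi_eq_real {α : ℝ} (hα : 0 < α) {s : ℝ} (hs : 0 < s) :
    chi α ((s : ℂ) - 1) = ((Hfun α s / 2 : ℝ) : ℂ) := by
  have hr := sqrtA_pos hα s
  have harg : 4 * (α : ℂ) ^ 2 + (1 + ((s : ℂ) - 1)) ^ 2 = ((4 * α ^ 2 + s ^ 2 : ℝ) : ℂ) := by
    push_cast; ring
  have hsq : csqrt (4 * (α : ℂ) ^ 2 + (1 + ((s : ℂ) - 1)) ^ 2)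
      = ((Real.sqrt (4 * α ^ 2 + s ^ 2) : ℝ) : ℂ) := by
    rw [harg, csqrt_ofReal (by positivity)]
  have hq : 2 * (α : ℂ) / (1 + ((s : ℂ) - 1) + ((Real.sqrt (4 * α ^ 2 + s ^ 2) : ℝ) : ℂ))
      = ((2 * α / (s + Real.sqrt (4 * α ^ 2 + s ^ 2)) : ℝ) : ℂ) := by
    push_cast; ring_nf
  have hlogpos : (0:ℝ) ≤ 2 * α / (s + Real.sqrt (4 * α ^ 2 + s ^ 2)) := by positivity
  unfold chi
  rw [hsq, hq, ← Complex.ofReal_log hlogpos]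
  unfold Hfun
  push_cast
  ring

/-- `G` is the function whose unique positive zero is `α₀`. -/
noncomputable def Gfun (α : ℝ) : ℝ :=
  Real.sqrt (1 + 4 * α ^ 2) + Real.log (2 * α / (1 + Real.sqrt (1 + 4 * α ^ 2)))

lemma Hfun_one {α : ℝ} : Hfun α 1 = Gfun α := by
  unfold Hfun Gfun
  rw [show 4 * α ^ 2 + 1 ^ 2 = 1 + 4 * α ^ 2 by ring]
  ring

lemma chi_zero_eq {α : ℝ} (hα : 0 < α) : chi α 0 = ((Gfun α / 2 : ℝ) : ℂ) := by
  have := chi_eq_real hα (s := 1) one_pos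
  rw [show ((1:ℝ):ℂ) - 1 = 0 by norm_num] at this
  rw [this, Hfun_one]

lemma Gfun_strictMono : StrictMonoOn Gfun (Set.Ioi 0) := by
  intro a ha b hb hab
  simp only [Set.mem_Ioi] at ha hb
  set ta := Real.sqrt (1 + 4 * a ^ 2) with hta
  set tb := Real.sqrt (1 + 4 * b ^ 2) with htb
  have hta1 : (1:ℝ) ≤ ta := by
    rw [hta]; exact Real.one_le_sqrt.2 (by nlinarith)
  have htb1 : (1:ℝ) ≤ tb := by
    rw [htb]; exact Real.one_le_sqrt.2 (by nlinarith)
  have htab : ta < tb := by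
    apply Real.sqrt_lt_sqrt (by positivity); nlinarith
  have hlogdiv : ∀ t : ℝ, 0 < t → ∀ c : ℝ, 0 < c →
      Real.log (c / t) = Real.log c - Real.log t := fun t ht c hc =>
    Real.log_div (ne_of_gt hc) (ne_of_gt ht)
  unfold Gfun
  rw [hlogdiv _ (by linarith) _ (by linarith), hlogdiv _ (by linarith) _ (by linarith)]
  have h1 : Real.log (2 * a) < Real.log (2 * b) :=
    Real.log_lt_log (by linarith) (by linarith)
  have h2 : Real.log (1 + tb) - Real.log (1 + ta) ≤ tb - ta := by
    have hrw : Real.log (1 + tb) - Real.log (1 + ta)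
        = Real.log ((1 + tb) / (1 + ta)) := by
      rw [Real.log_div (by linarith) (by linarith)]
    rw [hrw]
    have := Real.log_le_sub_one_of_pos (x := (1 + tb) / (1 + ta)) (by positivity)
    have h3 : (1 + tb) / (1 + ta) - 1 = (tb - ta) / (1 + ta) := by
      field_simp
      ring
    rw [h3] at this
    have h4 : (tb - ta) / (1 + ta) ≤ tb - ta := by
      rw [div_le_iff₀ (by linarith)]
      nlinarith
    linarith
  linarith

lemma Hfun_hasDerivAt {α : ℝ} (hα : 0 < α) {s : ℝ} (hs : 0 < s) :
    HasDerivAt (Hfun α)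
      (Real.log (2 * α / (s + Real.sqrt (4 * α ^ 2 + s ^ 2)))) s := by
  set r := Real.sqrt (4 * α ^ 2 + s ^ 2) with hrdef
  have hrpos : 0 < r := sqrtA_pos hα s
  have hden : 0 < s + r := by linarith
  have hinner : HasDerivAt (fun x : ℝ => 4 * α ^ 2 + x ^ 2) (2 * s) s := by
    simpa using (hasDerivAt_pow 2 s).const_add (4 * α ^ 2)
  have hr : HasDerivAt (fun x : ℝ => Real.sqrt (4 * α ^ 2 + x ^ 2)) (2 * s / (2 * r)) s :=
    hinner.sqrt (by positivity)
  have hd : HasDerivAt (fun x : ℝ => x + Real.sqrt (4 * α ^ 2 + x ^ 2))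
      (1 + 2 * s / (2 * r)) s := (hasDerivAt_id s).add hr
  have hq : HasDerivAt (fun x : ℝ => 2 * α / (x + Real.sqrt (4 * α ^ 2 + x ^ 2)))
      ((0 * (s + r) - 2 * α * (1 + 2 * s / (2 * r))) / (s + r) ^ 2) s :=
    (hasDerivAt_const s (2 * α)).div hd (ne_of_gt hden)
  have hqval : (0:ℝ) < 2 * α / (s + r) := by positivity
  have hlog : HasDerivAt
      (fun x : ℝ => Real.log (2 * α / (x + Real.sqrt (4 * α ^ 2 + x ^ 2))))
      ((0 * (s + r) - 2 * α * (1 + 2 * s / (2 * r))) / (s + r) ^ 2 / (2 * α / (s + r))) s :=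
    hq.log (ne_of_gt hqval)
  have hmul : HasDerivAt
      (fun x : ℝ => x * Real.log (2 * α / (x + Real.sqrt (4 * α ^ 2 + x ^ 2))))
      (1 * Real.log (2 * α / (s + r)) +
        s * ((0 * (s + r) - 2 * α * (1 + 2 * s / (2 * r))) / (s + r) ^ 2 / (2 * α / (s + r)))) s :=
    (hasDerivAt_id s).mul hlog
  have htot := hr.add hmul
  have heq : 2 * s / (2 * r) +
      (1 * Real.log (2 * α / (s + r)) +
        s * ((0 * (s + r) - 2 * α * (1 + 2 * s / (2 * r))) / (s + r) ^ 2 / (2 * α / (s + r))))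
      = Real.log (2 * α / (s + r)) := by
    field_simp
    ring
  rw [heq] at htot
  exact htot

lemma Hfun_continuousOn {α : ℝ} (hα : 0 < α) : ContinuousOn (Hfun α) (Set.Icc 0 1) := by
  have hc1 : Continuous fun s : ℝ => Real.sqrt (4 * α ^ 2 + s ^ 2) :=
    Real.continuous_sqrt.comp (by continuity)
  have hden : ∀ s ∈ Set.Icc (0:ℝ) 1, s + Real.sqrt (4 * α ^ 2 + s ^ 2) ≠ 0 := by
    intro s hs
    have := sqrtA_pos hα s
    have : 0 < s + Real.sqrt (4 * α ^ 2 + s ^ 2) := by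
      have := hs.1; linarith
    exact ne_of_gt this
  have hc2 : ContinuousOn (fun s : ℝ => 2 * α / (s + Real.sqrt (4 * α ^ 2 + s ^ 2)))
      (Set.Icc 0 1) :=
    (continuousOn_const).div ((continuous_id.add hc1).continuousOn) hden
  have hc3 : ContinuousOn
      (fun s : ℝ => Real.log (2 * α / (s + Real.sqrt (4 * α ^ 2 + s ^ 2))))
      (Set.Icc 0 1) := by
    apply hc2.log
    intro s hs
    have h1 := sqrtA_pos hα s
    have h2 : 0 < s + Real.sqrt (4 * α ^ 2 + s ^ 2) := by
      have := hs.1; linarith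
    positivity
  exact hc1.continuousOn.add (continuousOn_id.mul hc3)

lemma Hfun_strictAnti {α : ℝ} (hα : 0 < α) : StrictAntiOn (Hfun α) (Set.Icc 0 1) := by
  apply strictAntiOn_of_deriv_neg (convex_Icc 0 1) (Hfun_continuousOn hα)
  intro s hs
  rw [interior_Icc] at hs
  rw [(Hfun_hasDerivAt hα hs.1).deriv]
  have hrpos := sqrtA_pos hα s
  apply Real.log_neg (div_pos (by positivity) (by linarith [hs.1]))
  rw [div_lt_one (by have := sqrtA_pos hα s; linarith [hs.1])]
  have := sqrtA_ge hα s
  linarith [hs.1]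

lemma Hfun_zero {α : ℝ} (hα : 0 < α) : Hfun α 0 = 2 * α := by
  unfold Hfun
  rw [show 4 * α ^ 2 + 0 ^ 2 = (2 * α) ^ 2 by ring, Real.sqrt_sq (by positivity)]
  ring

theorem chi_at_zero_sign (α₀ : ℝ) (hα₀pos : 0 < α₀)
    (hα₀ : Real.sqrt (1 + 4 * α₀ ^ 2) +
      Real.log (2 * α₀ / (1 + Real.sqrt (1 + 4 * α₀ ^ 2))) = 0)
    (α : ℝ) (hα : 0 < α) :
    (α < α₀ → (chi α 0).re < 0 ∧
      ∃! ξ : ℝ, ξ ∈ Set.Ioo (0 : ℝ) 1 ∧ chi α (-(ξ : ℂ)) = 0) ∧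
    (α = α₀ → chi α 0 = 0) ∧
    (α₀ < α → 0 < (chi α 0).re) := by
  have hG0 : Gfun α₀ = 0 := hα₀
  refine ⟨?_, ?_, ?_⟩
  · -- α < α₀
    intro hlt
    have hGneg : Gfun α < 0 := by
      have := Gfun_strictMono (Set.mem_Ioi.2 hα) (Set.mem_Ioi.2 hα₀pos) hlt
      linarith
    constructor
    · rw [chi_zero_eq hα]
      simp only [Complex.ofReal_re]
      linarith
    · -- existence and uniqueness of the zero
      have hcont := Hfun_continuousOn hα
      have hanti := Hfun_strictAnti hα
      have hH1 : Hfun α 1 < 0 := by rw [Hfun_one]; exact hGneg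
      have hH0 : 0 < Hfun α 0 := by rw [Hfun_zero hα]; positivity
      have hmem : (0:ℝ) ∈ Set.Ioo (Hfun α 1) (Hfun α 0) := ⟨hH1, hH0⟩
      obtain ⟨t, ht, hHt⟩ := intermediate_value_Ioo' (le_of_lt one_pos) hcont hmem
      refine ⟨1 - t, ⟨⟨by linarith [ht.2], by linarith [ht.1]⟩, ?_⟩, ?_⟩
      · have : -((( 1 - t : ℝ)) : ℂ) = ((t : ℝ) : ℂ) - 1 := by push_cast; ring
        rw [this, chi_eq_real hα ht.1, hHt]
        norm_num
      · intro ξ' hξ'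
        obtain ⟨⟨hξ'0, hξ'1⟩, hchi⟩ := hξ'
        have hs' : (0:ℝ) < 1 - ξ' := by linarith
        have : -((ξ' : ℝ) : ℂ) = (((1 - ξ' : ℝ)) : ℂ) - 1 := by push_cast; ring
        rw [this, chi_eq_real hα hs'] at hchi
        have hHs' : Hfun α (1 - ξ') = 0 := by
          have := Complex.ofReal_eq_zero.1 hchi
          linarith
        have hinj := hanti.injOn
        have heq : 1 - ξ' = t := by
          apply hinj (Set.mem_Icc.2 ⟨by linarith, by linarith⟩)
            (Set.mem_Icc.2 ⟨le_of_lt ht.1, le_of_lt ht.2⟩)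
          rw [hHs', hHt]
        linarith
  · -- α = α₀
    intro heq
    rw [chi_zero_eq hα, heq, hG0]
    norm_num
  · -- α₀ < α
    intro hgt
    have hGpos : 0 < Gfun α := by
      have := Gfun_strictMono (Set.mem_Ioi.2 hα₀pos) (Set.mem_Ioi.2 hα) hgt
      linarith
    rw [chi_zero_eq hα]
    simp only [Complex.ofReal_re]
    linarith
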